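/- Let P be a finite nonempty poset that is the ordinal sum of antichains, i.e., for all x, y ∈ P one has x < y if and only if rank_P(x) < rank_P(y), and suppose P is not an antichain. Then the set A₀ = {x ∈ P : rank_P(x) = 0} is a lower set of P with ∅ ≠ A₀ ≠ P that is comparable under inclusion to every lower set of P; in particular, A₀ is an apex of the distributive lattice J(P) of lower sets of P, so J(P) is not simple. -/

import Mathlib

/-- Let `P` be a finite nonempty poset that is the ordinal sum of antichains, i.e.
`x < y` iff `rank_P(x) < rank_P(y)` (rank being the height `Order.height`), and suppose
`P` is not an antichain.  Then `A₀ = {x : rank_P(x) = 0}` is a lower set of `P` with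
`∅ ≠ A₀ ≠ P` that is comparable under inclusion to every lower set of `P`; in particular
`A₀` is an apex of the distributive lattice `J(P)` of lower sets of `P` (the lattice
`LowerSet P`), so `J(P)` is not simple. -/
theorem statement13 {P : Type*} [PartialOrder P] [Fintype P] [Nonempty P]
    (hsum : ∀ x y : P, x < y ↔ Order.height x < Order.height y)
    (hna : ¬ IsAntichain (· ≤ ·) (Set.univ : Set P)) :
    IsLowerSet {x : P | Order.height x = 0} ∧
    ({x : P | Order.height x = 0}).Nonempty ∧
    {x : P | Order.height x = 0} ≠ Set.univ ∧
    (∀ S : Set P, IsLowerSet S →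
      {x : P | Order.height x = 0} ⊆ S ∨ S ⊆ {x : P | Order.height x = 0}) ∧
    (∀ A : LowerSet P, (A : Set P) = {x : P | Order.height x = 0} →
      A ≠ ⊥ ∧ A ≠ ⊤ ∧ ∀ B : LowerSet P, A ≤ B ∨ B ≤ A) := by
  have hlower : IsLowerSet {x : P | Order.height x = 0} := by
    intro a b hba ha
    simp only [Set.mem_setOf_eq, Order.height_eq_zero] at ha ⊢
    exact ha.mono hba
  have hne : ({x : P | Order.height x = 0}).Nonempty := by
    obtain ⟨m, -, hm⟩ := Finset.exists_minimal (s := Finset.univ) ⟨Classical.arbitrary P, Finset.mem_univ _⟩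
    refine ⟨m, ?_⟩
    simp only [Set.mem_setOf_eq, Order.height_eq_zero]
    intro b hb
    exact hm (Finset.mem_univ b) hb
  have hneq : {x : P | Order.height x = 0} ≠ Set.univ := by
    simp only [IsAntichain, Set.Pairwise] at hna
    push_neg at hna
    obtain ⟨a, -, b, -, hab, h⟩ := hna
    simp only [Pi.compl_apply, compl_iff_not, not_not] at h
    have hlt : a < b := lt_of_le_of_ne h hab
    intro hcontra
    have hb : Order.height b = 0 := by rw [Set.eq_univ_iff_forall] at hcontra; exact hcontra b
    have := (hsum a b).mp hlt
    rw [hb] at this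
    simp at this
  have hcmp : ∀ S : Set P, IsLowerSet S →
      {x : P | Order.height x = 0} ⊆ S ∨ S ⊆ {x : P | Order.height x = 0} := by
    intro S hS
    by_cases h : {x : P | Order.height x = 0} ⊆ S
    · exact Or.inl h
    · right
      rw [Set.not_subset] at h
      obtain ⟨z, hz, hzS⟩ := h
      intro s hs
      simp only [Set.mem_setOf_eq] at hz ⊢
      by_contra hne0
      have hlt : Order.height z < Order.height s := by
        rw [hz]; exact pos_iff_ne_zero.mpr hne0
      exact hzS (hS ((hsum z s).mpr hlt).le hs)
  refine ⟨hlower, hne, hneq, hcmp, ?_⟩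
  intro A hA
  refine ⟨?_, ?_, ?_⟩
  · intro h; rw [h] at hA; simp only [LowerSet.coe_bot] at hA
    exact hne.ne_empty hA.symm
  · intro h; rw [h] at hA; simp only [LowerSet.coe_top] at hA
    exact hneq hA.symm
  · intro B
    rcases hcmp B B.lower with h | h
    · left; rw [← LowerSet.coe_subset_coe, hA]; exact h
    · right; rw [← LowerSet.coe_subset_coe, hA]; exact h
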